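/- arXiv:2201.01026 — 5 statements merged into one kernel-verified Lean document; each statement's English description precedes it below -/
import Mathlib

section
/- The expected newsvendor profit h(P,R) = (P-c)(R-bP) - (P-s)·E[(R-A)⁺] is supermodular in (P,R); equivalently, for any P₁ ≤ P₂ and R₁ ≤ R₂, h(P₂,R₂) - h(P₂,R₁) ≥ h(P₁,R₂) - h(P₁,R₁). -/
open MeasureTheory

/-- The expected newsvendor profit `h(P,R) = (P-c)(R-bP) - (P-s)·E[(R-A)⁺]` is
supermodular in `(P,R)`. -/
theorem stmt0
    {Ω : Type*} [MeasurableSpace Ω] (μ : Measure Ω) [IsProbabilityMeasure μ]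
    (A : Ω → ℝ) (hA : Integrable A μ)
    (b c s : ℝ) (hb : 0 < b) (hcs : s < c)
    (h : ℝ → ℝ → ℝ)
    (hdef : ∀ P R, h P R = (P - c) * (R - b * P) - (P - s) * ∫ ω, max (R - A ω) 0 ∂μ)
    (P₁ P₂ R₁ R₂ : ℝ) (hP₁ : c ≤ P₁) (hP : P₁ ≤ P₂) (hR : R₁ ≤ R₂) :
    h P₁ R₂ - h P₁ R₁ ≤ h P₂ R₂ - h P₂ R₁ := by
  have hf₁ : Integrable (fun ω => max (R₁ - A ω) 0) μ :=
    ((integrable_const R₁).sub hA).pos_part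
  have hf₂ : Integrable (fun ω => max (R₂ - A ω) 0) μ :=
    ((integrable_const R₂).sub hA).pos_part
  set I₁ := ∫ ω, max (R₁ - A ω) 0 ∂μ with hI₁
  set I₂ := ∫ ω, max (R₂ - A ω) 0 ∂μ with hI₂
  have key : I₂ ≤ I₁ + (R₂ - R₁) := by
    have hle : ∀ ω, max (R₂ - A ω) 0 ≤ max (R₁ - A ω) 0 + (R₂ - R₁) := by
      intro ω
      rcases le_total (R₂ - A ω) 0 with hx | hx
      · simp only [max_eq_right hx]
        have : (0:ℝ) ≤ max (R₁ - A ω) 0 := le_max_right _ _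
        linarith
      · simp only [max_eq_left hx]
        have : R₁ - A ω ≤ max (R₁ - A ω) 0 := le_max_left _ _
        linarith
    calc I₂ ≤ ∫ ω, (max (R₁ - A ω) 0 + (R₂ - R₁)) ∂μ := by
          exact integral_mono hf₂ (hf₁.add (integrable_const _)) hle
      _ = I₁ + (R₂ - R₁) := by
          rw [integral_add hf₁ (integrable_const _), integral_const]
          simp [hI₁]
  simp only [hdef]
  nlinarith [mul_nonneg (sub_nonneg.2 hP) (by linarith : (0:ℝ) ≤ R₂ - R₁ - (I₂ - I₁))]
end

section
/- The variance of the newsvendor payoff satisfies Var[H(P,R)] = (P-s)²·Var[(R-A)⁺], and this quantity is nondecreasing in P (for P ≥ s) and nondecreasing in R. -/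
open MeasureTheory ProbabilityTheory

section Aux

variable {Ω : Type*} [MeasurableSpace Ω] {μ : Measure Ω} [IsProbabilityMeasure μ]

lemma inner_eq_stmt2 {Y : Ω → ℝ} (hY : MemLp Y 2 μ) (c : ℝ) :
    ∫ ω, (Y ω - c) ^ 2 ∂μ = (∫ ω, Y ω ^ 2 ∂μ) - 2 * c * (∫ ω, Y ω ∂μ) + c ^ 2 := by
  have hYi : Integrable Y μ := hY.integrable one_le_two
  have hY2 : Integrable (fun ω => Y ω ^ 2) μ := hY.integrable_sq
  have hexp : ∀ ω, (Y ω - c) ^ 2 = (Y ω ^ 2 - 2 * c * Y ω) + c ^ 2 := fun ω => by ring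
  have int1 : Integrable (fun ω => Y ω ^ 2 - 2 * c * Y ω) μ := hY2.sub (hYi.const_mul (2 * c))
  have int2 : Integrable (fun ω => 2 * c * Y ω) μ := hYi.const_mul (2 * c)
  rw [integral_congr_ae (Filter.Eventually.of_forall hexp),
    integral_add int1 (integrable_const _),
    integral_sub hY2 int2, integral_const_mul, integral_const]
  simp

lemma var_affine_stmt2 (k t : ℝ) {Y : Ω → ℝ} (hY : MemLp Y 2 μ) :
    variance (fun ω => k - t * Y ω) μ = t ^ 2 * variance Y μ := by
  have hZ : MemLp (fun ω => k - t * Y ω) 2 μ := (memLp_const k).sub (hY.const_mul t)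
  have hYi : Integrable Y μ := hY.integrable one_le_two
  have hY2 : Integrable (fun ω => Y ω ^ 2) μ := hY.integrable_sq
  rw [variance_eq_sub hZ, variance_eq_sub hY]
  have h1 : ∫ ω, ((fun ω => k - t * Y ω) ^ 2) ω ∂μ
      = k ^ 2 - 2 * t * k * (∫ ω, Y ω ∂μ) + t ^ 2 * ∫ ω, Y ω ^ 2 ∂μ := by
    have hexp : ∀ ω, ((fun ω => k - t * Y ω) ^ 2) ω
        = (t ^ 2 * Y ω ^ 2 - 2 * t * k * Y ω) + k ^ 2 := fun ω => by
      simp [Pi.pow_apply]; ring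
    have ia : Integrable (fun ω => t ^ 2 * Y ω ^ 2) μ := hY2.const_mul (t ^ 2)
    have ib : Integrable (fun ω => 2 * t * k * Y ω) μ := hYi.const_mul (2 * t * k)
    have ic : Integrable (fun ω => t ^ 2 * Y ω ^ 2 - 2 * t * k * Y ω) μ := ia.sub ib
    rw [integral_congr_ae (Filter.Eventually.of_forall hexp),
      integral_add ic (integrable_const _),
      integral_sub ia ib, integral_const_mul, integral_const_mul, integral_const]
    simp; ring
  have h2 : ∫ ω, k - t * Y ω ∂μ = k - t * ∫ ω, Y ω ∂μ := by
    have it : Integrable (fun ω => t * Y ω) μ := hYi.const_mul t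
    rw [integral_sub (integrable_const _) it, integral_const_mul, integral_const]
    simp
  have h3 : ∫ ω, (Y ^ 2) ω ∂μ = ∫ ω, Y ω ^ 2 ∂μ := by simp
  simp only [h1, h2, h3]
  ring

lemma outer_form_stmt2 {Y : Ω → ℝ} (hY : MemLp Y 2 μ) :
    (fun ω' => ∫ ω, (Y ω - Y ω') ^ 2 ∂μ)
      = fun ω' => ((∫ ω, Y ω ^ 2 ∂μ) - 2 * (∫ ω, Y ω ∂μ) * Y ω') + Y ω' ^ 2 := by
  funext ω'
  rw [inner_eq_stmt2 hY]
  ring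

lemma double_eq_stmt2 {Y : Ω → ℝ} (hY : MemLp Y 2 μ) :
    ∫ ω', ∫ ω, (Y ω - Y ω') ^ 2 ∂μ ∂μ = 2 * variance Y μ := by
  have hYi : Integrable Y μ := hY.integrable one_le_two
  have hY2 : Integrable (fun ω => Y ω ^ 2) μ := hY.integrable_sq
  have ia : Integrable (fun ω' => (2 * ∫ ω, Y ω ∂μ) * Y ω') μ := hYi.const_mul _
  have ib : Integrable (fun ω' => (∫ ω, Y ω ^ 2 ∂μ) - (2 * ∫ ω, Y ω ∂μ) * Y ω') μ :=
    (integrable_const _).sub ia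
  rw [outer_form_stmt2 hY,
    integral_add ib hY2,
    integral_sub (integrable_const _) ia, integral_const_mul,
    integral_const, variance_eq_sub hY]
  have h3 : ∫ ω, (Y ^ 2) ω ∂μ = ∫ ω, Y ω ^ 2 ∂μ := by simp
  simp only [h3]
  simp
  ring

lemma outer_int_stmt2 {Y : Ω → ℝ} (hY : MemLp Y 2 μ) :
    Integrable (fun ω' => ∫ ω, (Y ω - Y ω') ^ 2 ∂μ) μ := by
  rw [outer_form_stmt2 hY]
  have ia : Integrable (fun ω' => (2 * ∫ ω, Y ω ∂μ) * Y ω') μ :=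
    (hY.integrable one_le_two).const_mul _
  exact ((integrable_const _).sub ia).add hY.integrable_sq

lemma var_mono_stmt2 {Y₁ Y₂ : Ω → ℝ} (h1 : MemLp Y₁ 2 μ) (h2 : MemLp Y₂ 2 μ)
    (h : ∀ ω ω', (Y₁ ω - Y₁ ω') ^ 2 ≤ (Y₂ ω - Y₂ ω') ^ 2) :
    variance Y₁ μ ≤ variance Y₂ μ := by
  have key : ∫ ω', ∫ ω, (Y₁ ω - Y₁ ω') ^ 2 ∂μ ∂μ
      ≤ ∫ ω', ∫ ω, (Y₂ ω - Y₂ ω') ^ 2 ∂μ ∂μ := by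
    refine integral_mono (outer_int_stmt2 h1) (outer_int_stmt2 h2) fun ω' => ?_
    exact integral_mono ((h1.sub (memLp_const _)).integrable_sq)
      ((h2.sub (memLp_const _)).integrable_sq) fun ω => h ω ω'
  rw [double_eq_stmt2 h1, double_eq_stmt2 h2] at key
  linarith

lemma max_sub_mono_stmt2 {x y δ : ℝ} (hδ : 0 ≤ δ) (hxy : x ≤ y) :
    max x 0 - max (x - δ) 0 ≤ max y 0 - max (y - δ) 0 := by
  simp only [max_def]
  split_ifs <;> linarith

lemma sq_diff_mono_aux_stmt2 {R₁ R₂ a a' : ℝ} (h : R₁ ≤ R₂) (haa : a ≤ a') :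
    (max (R₁ - a) 0 - max (R₁ - a') 0) ^ 2 ≤ (max (R₂ - a) 0 - max (R₂ - a') 0) ^ 2 := by
  have h2 := max_sub_mono_stmt2 (x := R₁ - a) (y := R₂ - a) (δ := a' - a)
    (by linarith) (by linarith)
  have e1 : R₁ - a - (a' - a) = R₁ - a' := by ring
  have e2 : R₂ - a - (a' - a) = R₂ - a' := by ring
  rw [e1, e2] at h2
  have hmax : max (R₁ - a') 0 ≤ max (R₁ - a) 0 := max_le_max (by linarith) le_rfl
  have h0 : 0 ≤ max (R₁ - a) 0 - max (R₁ - a') 0 := by linarith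
  exact pow_le_pow_left₀ h0 h2 2

lemma sq_diff_mono_stmt2 {R₁ R₂ a a' : ℝ} (h : R₁ ≤ R₂) :
    (max (R₁ - a) 0 - max (R₁ - a') 0) ^ 2 ≤ (max (R₂ - a) 0 - max (R₂ - a') 0) ^ 2 := by
  rcases le_total a a' with haa | haa
  · exact sq_diff_mono_aux_stmt2 h haa
  · calc (max (R₁ - a) 0 - max (R₁ - a') 0) ^ 2
        = (max (R₁ - a') 0 - max (R₁ - a) 0) ^ 2 := by ring
    _ ≤ (max (R₂ - a') 0 - max (R₂ - a) 0) ^ 2 := sq_diff_mono_aux_stmt2 h haa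
    _ = (max (R₂ - a) 0 - max (R₂ - a') 0) ^ 2 := by ring

end Aux

/-- `Var[H(P,R)] = (P-s)² Var[(R-A)⁺]`, nondecreasing in `P` (for `P ≥ s`) and in `R`. -/
theorem stmt2
    {Ω : Type*} [MeasurableSpace Ω] (μ : Measure Ω) [IsProbabilityMeasure μ]
    (A : Ω → ℝ) (hA : MemLp A 2 μ)
    (b c s : ℝ) (hb : 0 < b) (hcs : s < c)
    (H : ℝ → ℝ → Ω → ℝ)
    (hdef : ∀ P R ω, H P R ω = (P - c) * (R - b * P) - (P - s) * max (R - A ω) 0) :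
    (∀ P R : ℝ, variance (H P R) μ = (P - s) ^ 2 * variance (fun ω => max (R - A ω) 0) μ) ∧
    (∀ P₁ P₂ R : ℝ, s ≤ P₁ → P₁ ≤ P₂ → variance (H P₁ R) μ ≤ variance (H P₂ R) μ) ∧
    (∀ P R₁ R₂ : ℝ, s ≤ P → R₁ ≤ R₂ → variance (H P R₁) μ ≤ variance (H P R₂) μ) := by
  have hY : ∀ R : ℝ, MemLp (fun ω => max (R - A ω) 0) 2 μ := by
    intro R
    have h1 : MemLp (fun ω => R - A ω) 2 μ := (memLp_const R).sub hA
    have := h1.sup (memLp_const (0 : ℝ))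
    simpa [Pi.sup_def, max_comm] using this
  have hpart1 : ∀ P R : ℝ,
      variance (H P R) μ = (P - s) ^ 2 * variance (fun ω => max (R - A ω) 0) μ := by
    intro P R
    have hHfun : H P R = fun ω => (P - c) * (R - b * P) - (P - s) * max (R - A ω) 0 :=
      funext (hdef P R)
    rw [hHfun]
    exact var_affine_stmt2 _ _ (hY R)
  refine ⟨hpart1, ?_, ?_⟩
  · intro P₁ P₂ R h1 h2
    rw [hpart1 P₁ R, hpart1 P₂ R]
    exact mul_le_mul_of_nonneg_right
      (pow_le_pow_left₀ (by linarith) (by linarith) 2) (variance_nonneg _ _)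
  · intro P R₁ R₂ hP hR
    rw [hpart1 P R₁, hpart1 P R₂]
    exact mul_le_mul_of_nonneg_left
      (var_mono_stmt2 (hY R₁) (hY R₂) fun ω ω' => sq_diff_mono_stmt2 hR) (sq_nonneg _)
end

section
/- Let μ = E[A] and σ = √(Var A). For every P with s ≤ P, the expected newsvendor profit satisfies E[(P-c)(μ - bP) - (P-s)(μ - A)⁺] ≥ -bP² + (bc + μ - σ/2)P - (cμ - sσ/2). -/
open MeasureTheory ProbabilityTheory

/-- Lower bound on the expected newsvendor profit at `R = E[A]`:
`(P-c)(μ-bP) - (P-s)E[(μ-A)⁺] ≥ -bP² + (bc + μ - σ/2)P - (cμ - sσ/2)`. -/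
theorem stmt7
    {Ω : Type*} [MeasurableSpace Ω] (μ : Measure Ω) [IsProbabilityMeasure μ]
    (A : Ω → ℝ) (hA : MemLp A 2 μ)
    (b c s P : ℝ) (hb : 0 < b) (hcs : s < c) (hP : s ≤ P) :
    -b * P ^ 2 + (b * c + (∫ ω, A ω ∂μ) - Real.sqrt (variance A μ) / 2) * P
        - (c * (∫ ω, A ω ∂μ) - s * Real.sqrt (variance A μ) / 2)
      ≤ (P - c) * ((∫ ω, A ω ∂μ) - b * P)
          - (P - s) * ∫ ω, max ((∫ x, A x ∂μ) - A ω) 0 ∂μ := by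
  set m : ℝ := ∫ ω, A ω ∂μ with hm
  set Y : Ω → ℝ := fun ω => |A ω - m| with hY
  have hA1 : Integrable A μ := hA.integrable one_le_two
  have hYm : MemLp Y 2 μ := (hA.sub (memLp_const m)).abs
  have hY1 : Integrable Y μ := hYm.integrable one_le_two
  -- ∫ Y² = variance A
  have hvar : variance A μ = ∫ ω, Y ω ^ 2 ∂μ := by
    rw [variance_eq_integral hA.aemeasurable]
    exact integral_congr_ae (Filter.Eventually.of_forall fun ω => by
      simp [hY, sq_abs, ← hm])
  -- (∫ Y)² ≤ ∫ Y²
  have hsq : (∫ ω, Y ω ∂μ) ^ 2 ≤ ∫ ω, Y ω ^ 2 ∂μ := by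
    have := variance_nonneg Y μ
    rw [variance_eq_sub hYm] at this
    simpa using le_of_sub_nonneg this
  have hYnn : 0 ≤ ∫ ω, Y ω ∂μ := integral_nonneg fun ω => abs_nonneg _
  have hYle : ∫ ω, Y ω ∂μ ≤ Real.sqrt (variance A μ) := by
    rw [hvar]
    exact (Real.le_sqrt hYnn (integral_nonneg fun ω => sq_nonneg _)).mpr hsq
  -- ∫ max (m - A) 0 = (∫ (m - A) + ∫ Y)/2 = (∫ Y)/2
  have hmax : ∫ ω, max (m - A ω) 0 ∂μ = (∫ ω, Y ω ∂μ) / 2 := by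
    have h1 : ∀ ω, max (m - A ω) 0 = ((m - A ω) + |A ω - m|) / 2 := by
      intro ω
      rw [abs_sub_comm]
      rcases le_total (A ω) m with h | h
      · rw [max_eq_left (by linarith), abs_of_nonneg (by linarith)]; ring
      · rw [max_eq_right (by linarith), abs_of_nonpos (by linarith)]; ring
    simp_rw [h1]
    rw [integral_div,
      integral_add (show Integrable (fun ω => m - A ω) μ from (integrable_const m).sub hA1)
        (show Integrable (fun ω => |A ω - m|) μ from hY1),
      integral_sub (integrable_const m) hA1]
    simp [hY, ← hm]
  have hbound : ∫ ω, max (m - A ω) 0 ∂μ ≤ Real.sqrt (variance A μ) / 2 := by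
    rw [hmax]; linarith
  have hnn : 0 ≤ ∫ ω, max (m - A ω) 0 ∂μ :=
    integral_nonneg fun ω => le_max_right _ _
  nlinarith [mul_le_mul_of_nonneg_left hbound (by linarith : (0:ℝ) ≤ P - s)]
end

section
/- For κ > 0, σ > 0 and 0 ≤ τ < π/(4κ), the function f₂(τ) = (κ/σ²)·sin(κτ)/(cos(κτ) - sin(κτ)) satisfies the Riccati equation f₂'(τ) = 2κ f₂(τ) + 2σ² f₂(τ)² + (κ/σ)², with initial condition f₂(0) = 0, and f₂(τ) ≥ 0 on this interval. -/
/-- For `κ, σ > 0` and `0 ≤ τ < π/(4κ)`, the function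
`f₂(τ) = (κ/σ²)·sin(κτ)/(cos(κτ) - sin(κτ))` solves the Riccati equation
`f₂' = 2κ f₂ + 2σ² f₂² + (κ/σ)²`, with `f₂(0) = 0` and `f₂ ≥ 0` on this interval. -/
theorem stmt12
    (κ σ : ℝ) (hκ : 0 < κ) (hσ : 0 < σ)
    (f₂ : ℝ → ℝ)
    (hf : ∀ τ, f₂ τ = (κ / σ ^ 2) * Real.sin (κ * τ) /
      (Real.cos (κ * τ) - Real.sin (κ * τ))) :
    f₂ 0 = 0 ∧
    ∀ τ ∈ Set.Ico (0 : ℝ) (Real.pi / (4 * κ)),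
      0 ≤ f₂ τ ∧
      HasDerivAt f₂ (2 * κ * f₂ τ + 2 * σ ^ 2 * (f₂ τ) ^ 2 + (κ / σ) ^ 2) τ := by
  have hfun : f₂ = fun τ => (κ / σ ^ 2) * Real.sin (κ * τ) /
      (Real.cos (κ * τ) - Real.sin (κ * τ)) := funext hf
  subst hfun
  constructor
  · simp
  · intro τ hτ
    obtain ⟨hτ0, hτ1⟩ := hτ
    set x := κ * τ with hx
    have hx0 : 0 ≤ x := mul_nonneg hκ.le hτ0
    have hx1 : x < Real.pi / 4 := by
      have := (mul_lt_mul_iff_right₀ hκ).mpr hτ1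
      calc x = κ * τ := rfl
        _ < κ * (Real.pi / (4 * κ)) := this
        _ = Real.pi / 4 := by field_simp
    have hpi : Real.pi / 4 ≤ Real.pi / 2 := by
      have := Real.pi_pos; linarith
    have hsin : 0 ≤ Real.sin x := Real.sin_nonneg_of_nonneg_of_le_pi hx0
      (by nlinarith [Real.pi_pos])
    have hsc : Real.sin x < Real.cos x := by
      have h1 : Real.sin x < Real.sin (Real.pi / 4) := by
        apply Real.sin_lt_sin_of_lt_of_le_pi_div_two (by linarith [Real.pi_pos]) hpi hx1
      have h2 : Real.cos (Real.pi / 4) < Real.cos x := by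
        apply Real.cos_lt_cos_of_nonneg_of_le_pi hx0 (by nlinarith [Real.pi_pos]) hx1
      rw [Real.sin_pi_div_four] at h1
      rw [Real.cos_pi_div_four] at h2
      linarith
    have hd : 0 < Real.cos x - Real.sin x := by linarith
    have hdne : Real.cos x - Real.sin x ≠ 0 := ne_of_gt hd
    constructor
    · apply div_nonneg _ hd.le
      exact mul_nonneg (div_nonneg hκ.le (sq_nonneg σ)) hsin
    · have hu : HasDerivAt (fun τ : ℝ => κ * τ) κ τ := by
        simpa using (hasDerivAt_id τ).const_mul κ
      have hs : HasDerivAt (fun τ : ℝ => Real.sin (κ * τ)) (Real.cos x * κ) τ :=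
        (Real.hasDerivAt_sin x).comp τ hu
      have hc : HasDerivAt (fun τ : ℝ => Real.cos (κ * τ)) (-Real.sin x * κ) τ :=
        (Real.hasDerivAt_cos x).comp τ hu
      have hnum : HasDerivAt (fun τ : ℝ => (κ / σ ^ 2) * Real.sin (κ * τ))
          ((κ / σ ^ 2) * (Real.cos x * κ)) τ := hs.const_mul _
      have hden : HasDerivAt (fun τ : ℝ => Real.cos (κ * τ) - Real.sin (κ * τ))
          (-Real.sin x * κ - Real.cos x * κ) τ := hc.sub hs
      have hdiv := hnum.div hden hdne
      refine hdiv.congr_deriv ?_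
      simp only [← hx]
      have hpy : Real.sin x ^ 2 + Real.cos x ^ 2 = 1 := Real.sin_sq_add_cos_sq x
      have hσ2 : (σ : ℝ) ^ 2 ≠ 0 := pow_ne_zero 2 hσ.ne'
      field_simp
      ring_nf
end

section
/- For a real random variable A and real R with P(A ≥ R) > 0, one has E[min(R, A)] = R·P(A ≥ R) + E[A·1{A < R}]. Consequently, the function T(R) = E[A·1{A < R}]/P(A ≥ R) is nondecreasing on any interval where E[min(R,A)] ≥ 0. -/
open MeasureTheory

/-- `E[min(R,A)] = R·P(A ≥ R) + E[A·1{A < R}]`, and consequently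
`T(R) = E[A·1{A<R}]/P(A ≥ R)` is nondecreasing on any interval where
`E[min(R,A)] ≥ 0` (and `P(A ≥ R) > 0`). -/
theorem stmt16
    {Ω : Type*} [MeasurableSpace Ω] (μ : Measure Ω) [IsProbabilityMeasure μ]
    (A : Ω → ℝ) (hA : Integrable A μ) (hAm : Measurable A) :
    (∀ R : ℝ, 0 < μ {ω | R ≤ A ω} →
      ∫ ω, min R (A ω) ∂μ
        = R * (μ {ω | R ≤ A ω}).toReal + ∫ ω, (if A ω < R then A ω else 0) ∂μ) ∧
    (∀ R₁ R₂ : ℝ, R₁ ≤ R₂ → 0 < μ {ω | R₂ ≤ A ω} →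
      (∀ R ∈ Set.Icc R₁ R₂, 0 ≤ ∫ ω, min R (A ω) ∂μ) →
      (∫ ω, (if A ω < R₁ then A ω else 0) ∂μ) / (μ {ω | R₁ ≤ A ω}).toReal
        ≤ (∫ ω, (if A ω < R₂ then A ω else 0) ∂μ) / (μ {ω | R₂ ≤ A ω}).toReal) := by
  have hint1 : ∀ R : ℝ, Integrable (fun ω => if A ω < R then A ω else 0) μ := by
    intro R
    have hs' : MeasurableSet {ω | A ω < R} := hAm measurableSet_Iio
    have := hA.indicator hs'
    rw [show (fun ω => if A ω < R then A ω else 0) = {ω | A ω < R}.indicator A from by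
      funext ω; simp [Set.indicator_apply]]
    exact this
  have key : ∀ R : ℝ, ∫ ω, min R (A ω) ∂μ
      = R * (μ {ω | R ≤ A ω}).toReal + ∫ ω, (if A ω < R then A ω else 0) ∂μ := by
    intro R
    have hs : MeasurableSet {ω | R ≤ A ω} := hAm measurableSet_Ici
    have hint2 : Integrable (fun ω => if R ≤ A ω then R else 0) μ := by
      have : Integrable (Set.indicator {ω | R ≤ A ω} (fun _ => R)) μ :=
        (integrable_const R).indicator hs
      rw [show (fun ω => if R ≤ A ω then R else 0) = {ω | R ≤ A ω}.indicator (fun _ => R) from by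
        funext ω; simp [Set.indicator_apply]]
      exact this
    have hpt : ∀ ω, min R (A ω)
        = (if R ≤ A ω then R else 0) + (if A ω < R then A ω else 0) := by
      intro ω
      by_cases h : R ≤ A ω
      · simp [h, not_lt.mpr h, min_eq_left h]
      · have h' : A ω < R := lt_of_not_ge h
        simp [h, h', min_eq_right h'.le]
    calc ∫ ω, min R (A ω) ∂μ
        = ∫ ω, ((if R ≤ A ω then R else 0) + (if A ω < R then A ω else 0)) ∂μ := by
          simp only [hpt]
      _ = (∫ ω, (if R ≤ A ω then R else 0) ∂μ)
            + ∫ ω, (if A ω < R then A ω else 0) ∂μ := integral_add hint2 (hint1 R)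
      _ = R * (μ {ω | R ≤ A ω}).toReal + ∫ ω, (if A ω < R then A ω else 0) ∂μ := by
          congr 1
          have h1 : (fun ω => if R ≤ A ω then R else 0)
              = Set.indicator {ω | R ≤ A ω} (fun _ => R) := by
            funext ω; simp [Set.indicator_apply]
          rw [h1, integral_indicator_const _ hs]
          simp [mul_comm, measureReal_def]
  refine ⟨fun R _ => key R, fun R₁ R₂ hR hpos2 hnn => ?_⟩
  set S : Set Ω := {ω | R₁ ≤ A ω ∧ A ω < R₂} with hSdef
  have hSm : MeasurableSet S := hAm measurableSet_Ico
  set q : ℝ := (μ S).toReal with hqdef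
  set p₁ : ℝ := (μ {ω | R₁ ≤ A ω}).toReal with hp1def
  set p₂ : ℝ := (μ {ω | R₂ ≤ A ω}).toReal with hp2def
  set e₁ : ℝ := ∫ ω, (if A ω < R₁ then A ω else 0) ∂μ with he1def
  set e₂ : ℝ := ∫ ω, (if A ω < R₂ then A ω else 0) ∂μ with he2def
  have hq0 : 0 ≤ q := ENNReal.toReal_nonneg
  have hp2pos : 0 < p₂ := ENNReal.toReal_pos hpos2.ne' (measure_ne_top μ _)
  -- p₁ = p₂ + q
  have hunion : {ω | R₁ ≤ A ω} = {ω | R₂ ≤ A ω} ∪ S := by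
    ext ω
    simp only [Set.mem_setOf_eq, Set.mem_union, hSdef]
    constructor
    · intro h
      by_cases h2 : R₂ ≤ A ω
      · exact Or.inl h2
      · exact Or.inr ⟨h, lt_of_not_ge h2⟩
    · rintro (h | ⟨h, _⟩)
      · exact hR.trans h
      · exact h
  have hdisj : Disjoint {ω | R₂ ≤ A ω} S := by
    rw [Set.disjoint_left]
    rintro ω h ⟨_, h2⟩
    exact absurd h (not_le.mpr h2)
  have hp : p₁ = p₂ + q := by
    rw [hp1def, hp2def, hqdef, hunion, measure_union hdisj hSm,
      ENNReal.toReal_add (measure_ne_top μ _) (measure_ne_top μ _)]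
  have hp1pos : 0 < p₁ := by rw [hp]; linarith
  -- e₂ = e₁ + ∫_S A
  have he : e₂ = e₁ + ∫ ω in S, A ω ∂μ := by
    have hpt : ∀ ω, (if A ω < R₂ then A ω else 0)
        = (if A ω < R₁ then A ω else 0) + Set.indicator S A ω := by
      intro ω
      by_cases h1 : A ω < R₁
      · have h2 : A ω < R₂ := h1.trans_le hR
        have : ω ∉ S := fun hs => absurd hs.1 (not_le.mpr h1)
        simp [h1, h2, Set.indicator_apply, this]
      · by_cases h2 : A ω < R₂
        · have : ω ∈ S := ⟨le_of_not_gt h1, h2⟩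
          simp [h1, h2, Set.indicator_apply, this]
        · have : ω ∉ S := fun hs => absurd hs.2 h2
          simp [h1, h2, Set.indicator_apply, this]
    calc e₂ = ∫ ω, ((if A ω < R₁ then A ω else 0) + Set.indicator S A ω) ∂μ := by
          rw [he2def]; simp only [hpt]
      _ = e₁ + ∫ ω, Set.indicator S A ω ∂μ :=
          integral_add (hint1 R₁) (hA.indicator hSm)
      _ = e₁ + ∫ ω in S, A ω ∂μ := by rw [integral_indicator hSm]
  -- ∫_S A ≥ R₁ * q
  have hSlow : R₁ * q ≤ ∫ ω in S, A ω ∂μ := by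
    have h1 : ∫ ω in S, (R₁ : ℝ) ∂μ = q * R₁ := by
      rw [setIntegral_const]; simp [smul_eq_mul, measureReal_def, hqdef]
    have h2 : ∫ ω in S, (R₁ : ℝ) ∂μ ≤ ∫ ω in S, A ω ∂μ := by
      apply setIntegral_mono_on ((integrable_const R₁).integrableOn)
        hA.integrableOn hSm
      intro ω hω; exact hω.1
    linarith [mul_comm R₁ q ▸ h1 ▸ h2]
  -- 0 ≤ R₁ p₁ + e₁
  have h0 : 0 ≤ R₁ * p₁ + e₁ := by
    have := hnn R₁ ⟨le_refl R₁, hR⟩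
    rw [key R₁] at this
    linarith
  rw [div_le_div_iff₀ hp1pos hp2pos]
  have h0' : 0 ≤ R₁ * (p₂ + q) + e₁ := by rw [← hp]; exact h0
  have hqe : 0 ≤ q * (R₁ * (p₂ + q) + e₁) := mul_nonneg hq0 h0'
  have hIp : R₁ * q * p₂ ≤ (∫ ω in S, A ω ∂μ) * p₂ :=
    mul_le_mul_of_nonneg_right hSlow hp2pos.le
  have hIq : R₁ * q * q ≤ (∫ ω in S, A ω ∂μ) * q :=
    mul_le_mul_of_nonneg_right hSlow hq0
  rw [he, hp]
  nlinarith [hqe, hIp, hIq]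
end
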